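/- The disjoint union (coproduct) of two stock-flow diagrams (F,φ) and (F',φ') — taking disjoint unions of stocks, flows, and links, with flow functions inherited from the components — is again a stock-flow diagram, and the vector field of the disjoint union equals i_* ∘ v(F,φ) ∘ i* + i'_* ∘ v(F',φ') ∘ i'* where i, i' are the injections of the stock sets into their disjoint union. -/

import Mathlib

open scoped Classical

/-- A stock-flow diagram: finite sets of stocks, flows and links, upstream/downstream
maps, source/target maps for links, and a continuous flow function for each flow,
depending on the values indexed by the links targeting that flow. -/
structure StockFlow where
  S : Type
  F : Type
  L : Type
  [finS : Fintype S]
  [finF : Fintype F]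
  [finL : Fintype L]
  u : F → S
  d : F → S
  s : L → S
  t : L → F
  φ : ∀ f : F, ({l : L // t l = f} → ℝ) → ℝ
  φ_cont : ∀ f, Continuous (φ f)

attribute [instance] StockFlow.finS StockFlow.finF StockFlow.finL

/-- A morphism of stock-flow diagrams: a natural transformation satisfying the
flow-function compatibility equation. -/
structure SFHom (A B : StockFlow) where
  αS : A.S → B.S
  αF : A.F → B.F
  αL : A.L → B.L
  nat_u : ∀ f, B.u (αF f) = αS (A.u f)
  nat_d : ∀ f, B.d (αF f) = αS (A.d f)
  nat_s : ∀ l, B.s (αL l) = αS (A.s l)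
  nat_t : ∀ l, B.t (αL l) = αF (A.t l)
  compat : ∀ g : B.F, ∀ y : {l : B.L // B.t l = g} → ℝ,
    B.φ g y = ∑ f : {f : A.F // αF f = g},
      A.φ f.1 (fun l => y ⟨αL l.1, by rw [nat_t, l.2]; exact f.2⟩)

/-- The vector field (differential equation semantics) of a stock-flow diagram. -/
noncomputable def vf (A : StockFlow) (x : A.S → ℝ) (σ : A.S) : ℝ :=
  (∑ f : {f : A.F // A.d f = σ}, A.φ f.1 (fun l => x (A.s l.1)))
  - ∑ f : {f : A.F // A.u f = σ}, A.φ f.1 (fun l => x (A.s l.1))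

/-- Pullback (precomposition) of real-valued functions. -/
def pullback {S T : Type} (f : S → T) (y : T → ℝ) : S → ℝ := fun σ => y (f σ)

/-- Pushforward (summation over fibers) of real-valued functions. -/
noncomputable def pushforward {S T : Type} [Fintype S] (f : S → T) (x : S → ℝ) : T → ℝ :=
  fun τ => ∑ σ : {σ : S // f σ = τ}, x σ.1

/-- The disjoint union of two stock-flow diagrams: disjoint unions of stocks,
flows and links, with flow functions inherited from the components. That this is
well-defined (in particular, that the inherited flow functions are continuous)
is part of STATEMENT 13. -/
noncomputable def sumSF (A B : StockFlow) : StockFlow where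
  S := A.S ⊕ B.S
  F := A.F ⊕ B.F
  L := A.L ⊕ B.L
  u := Sum.map A.u B.u
  d := Sum.map A.d B.d
  s := Sum.map A.s B.s
  t := Sum.map A.t B.t
  φ := fun f =>
    match f with
    | Sum.inl f => fun y => A.φ f (fun l => y ⟨Sum.inl l.1, by simp [l.2]⟩)
    | Sum.inr f => fun y => B.φ f (fun l => y ⟨Sum.inr l.1, by simp [l.2]⟩)
  φ_cont := fun f => by
    cases f with
    | inl f => exact (A.φ_cont f).comp (continuous_pi fun l => continuous_apply _)
    | inr f => exact (B.φ_cont f).comp (continuous_pi fun l => continuous_apply _)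


def fiberInl {α β γ δ : Type} (g : α → γ) (h : β → δ) (c : γ) :
    {f : α ⊕ β // Sum.map g h f = Sum.inl c} ≃ {a : α // g a = c} where
  toFun := fun f => match f with
    | ⟨Sum.inl a, ha⟩ => ⟨a, by simpa using ha⟩
    | ⟨Sum.inr _, hb⟩ => absurd hb (by simp)
  invFun a := ⟨Sum.inl a.1, by simp [a.2]⟩
  left_inv := by
    rintro ⟨(a|b), hf⟩
    · rfl
    · exact absurd hf (by simp)
  right_inv a := rfl

def fiberInr {α β γ δ : Type} (g : α → γ) (h : β → δ) (d : δ) :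
    {f : α ⊕ β // Sum.map g h f = Sum.inr d} ≃ {b : β // h b = d} where
  toFun := fun f => match f with
    | ⟨Sum.inr b, hb⟩ => ⟨b, by simpa using hb⟩
    | ⟨Sum.inl _, ha⟩ => absurd ha (by simp)
  invFun b := ⟨Sum.inr b.1, by simp [b.2]⟩
  left_inv := by
    rintro ⟨(a|b), hf⟩
    · exact absurd hf (by simp)
    · rfl
  right_inv b := rfl

instance isEmptyInlInr {α β : Type} (a : α) : IsEmpty {b : β // (Sum.inr b : α ⊕ β) = Sum.inl a} :=
  ⟨fun b => by simpa using b.2⟩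

instance isEmptyInrInl {α β : Type} (b : β) : IsEmpty {a : α // (Sum.inl a : α ⊕ β) = Sum.inr b} :=
  ⟨fun a => by simpa using a.2⟩

instance uniqueInl {α β : Type} (a : α) : Unique {a' : α // (Sum.inl a' : α ⊕ β) = Sum.inl a} where
  default := ⟨a, rfl⟩
  uniq x := Subtype.ext (by simpa using x.2)

instance uniqueInr {α β : Type} (b : β) : Unique {b' : β // (Sum.inr b' : α ⊕ β) = Sum.inr b} where
  default := ⟨b, rfl⟩
  uniq x := Subtype.ext (by simpa using x.2)

/-- the vector field of the disjoint union of two stock-flow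
diagrams is `i_* ∘ v(F,φ) ∘ i* + i'_* ∘ v(F',φ') ∘ i'*`, where `i, i'` are the
injections of the stock sets into their disjoint union. -/
theorem vf_sumSF (A B : StockFlow) :
    vf (sumSF A B) = fun x =>
      pushforward (Sum.inl : A.S → A.S ⊕ B.S) (vf A (pullback Sum.inl x))
      + pushforward (Sum.inr : B.S → A.S ⊕ B.S) (vf B (pullback Sum.inr x)) := by
  funext x σ
  have hA : ∀ (G : (sumSF A B).F → (sumSF A B).S) (g : A.F → A.S) (h : B.F → B.S),
      G = Sum.map g h → ∀ a : A.S,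
      (∑ f : {f : (sumSF A B).F // G f = Sum.inl a},
        (sumSF A B).φ f.1 (fun l => x ((sumSF A B).s l.1)))
      = ∑ f : {f : A.F // g f = a}, A.φ f.1 (fun l => pullback Sum.inl x (A.s l.1)) := by
    rintro G g h rfl a
    have e := Fintype.sum_equiv (fiberInl g h a)
      (fun f => (sumSF A B).φ f.1 (fun l => x ((sumSF A B).s l.1)))
      (fun f => A.φ f.1 (fun l => pullback Sum.inl x (A.s l.1)))
      (by rintro ⟨(f|f), hf⟩
          · rfl
          · exact absurd hf (by simp))
    refine Eq.trans (Finset.sum_congr ?_ fun _ _ => rfl) e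
    congr 1; exact Subsingleton.elim _ _
  have hB : ∀ (G : (sumSF A B).F → (sumSF A B).S) (g : A.F → A.S) (h : B.F → B.S),
      G = Sum.map g h → ∀ b : B.S,
      (∑ f : {f : (sumSF A B).F // G f = Sum.inr b},
        (sumSF A B).φ f.1 (fun l => x ((sumSF A B).s l.1)))
      = ∑ f : {f : B.F // h f = b}, B.φ f.1 (fun l => pullback Sum.inr x (B.s l.1)) := by
    rintro G g h rfl b
    have e := Fintype.sum_equiv (fiberInr g h b)
      (fun f => (sumSF A B).φ f.1 (fun l => x ((sumSF A B).s l.1)))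
      (fun f => B.φ f.1 (fun l => pullback Sum.inr x (B.s l.1)))
      (by rintro ⟨(f|f), hf⟩
          · exact absurd hf (by simp)
          · rfl)
    refine Eq.trans (Finset.sum_congr ?_ fun _ _ => rfl) e
    congr 1; exact Subsingleton.elim _ _
  cases σ with
  | inl a =>
      show vf (sumSF A B) x (Sum.inl a) = _
      simp only [Pi.add_apply, pushforward, Fintype.sum_unique, Finset.univ_eq_empty,
        Finset.sum_empty, Fintype.sum_empty, add_zero]
      show _ = vf A (pullback Sum.inl x) a
      unfold vf
      exact congrArg₂ (· - ·) (hA (sumSF A B).d A.d B.d rfl a) (hA (sumSF A B).u A.u B.u rfl a)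
  | inr b =>
      show vf (sumSF A B) x (Sum.inr b) = _
      simp only [Pi.add_apply, pushforward, Fintype.sum_unique, Finset.univ_eq_empty,
        Finset.sum_empty, Fintype.sum_empty, zero_add]
      show _ = vf B (pullback Sum.inr x) b
      unfold vf
      exact congrArg₂ (· - ·) (hB (sumSF A B).d A.d B.d rfl b) (hB (sumSF A B).u A.u B.u rfl b)
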